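/- The triple (3/4, 1/6, 1/12) is nearly-Ramsey: for every ε > 0 and every two-colouring of the circle of unit perimeter, there is a monochromatic triple of points forming an ε-close permuted copy of the triangle with arc side lengths 3/4, 1/6, 1/12. -/

import Mathlib

/-- Arc-distance on the unit-perimeter circle modelled by ℝ. -/
noncomputable def arcDist (x y : ℝ) : ℝ := min (Int.fract (x - y)) (1 - Int.fract (x - y))

lemma arcDist_le_abs (x y : ℝ) : arcDist x y ≤ |x - y| := by
  unfold arcDist
  set e := x - y with he
  have hf0 : 0 ≤ Int.fract e := Int.fract_nonneg e
  have hf1 : Int.fract e < 1 := Int.fract_lt_one e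
  rcases le_total (1/2 : ℝ) |e| with h | h
  · rcases le_total (Int.fract e) (1/2) with h2 | h2
    · exact le_trans (min_le_left _ _) (le_trans h2 h)
    · exact le_trans (min_le_right _ _) (le_trans (by linarith) h)
  · rcases le_total 0 e with h0 | h0
    · have : Int.fract e = e := Int.fract_eq_self.mpr ⟨h0, by rw [abs_of_nonneg h0] at h; linarith⟩
      rw [this, abs_of_nonneg h0]
      exact min_le_left _ _
    · rcases eq_or_lt_of_le h0 with h0' | h0'
      · rw [h0', Int.fract_zero]
        norm_num
      · have hfl : ⌊e⌋ = -1 := by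
          apply Int.floor_eq_iff.mpr
          constructor
          · push_cast
            rw [abs_of_nonpos h0] at h
            linarith
          · push_cast
            linarith
        have : Int.fract e = e + 1 := by
          rw [← Int.self_sub_floor, hfl]
          push_cast
          ring
        rw [this, abs_of_nonpos h0]
        have : 1 - (e + 1) = -e := by ring
        rw [this]
        exact min_le_right _ _

set_option synthInstance.maxSize 2000 in
set_option maxHeartbeats 1000000 in
lemma boolCore (a0 a6 a10 b0 b1 b2 b3 b4 b6 b7 b8 b9 b11 : Bool)
    (h1 : ¬(b11 = b9 ∧ b0 = b9)) (h2 : ¬(b0 = a10 ∧ b1 = a10)) (h3 : ¬(a10 = b9 ∧ a0 = b9))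
    (h4 : ¬(a0 = b11 ∧ b2 = b11)) (h5 : ¬(b2 = b1 ∧ b4 = b1)) (h6 : ¬(b1 = a0 ∧ b3 = a0))
    (h7 : ¬(b2 = b0 ∧ b3 = b0)) (h8 : ¬(a10 = b8 ∧ b11 = b8)) (h9 : ¬(b4 = b3 ∧ b6 = b3))
    (h10 : ¬(a6 = b4 ∧ b7 = b4)) (h11 : ¬(b7 = b6 ∧ b9 = b6)) (h12 : ¬(b8 = a6 ∧ b9 = a6)) :
    b0 = a0 := by
  revert h1 h2 h3 h4 h5 h6 h7 h8 h9 h10 h11 h12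
  revert a0 a6 a10 b0 b1 b2 b3 b4 b6 b7 b8 b9 b11
  decide

/-- The triple `(3/4, 1/6, 1/12)` is nearly-Ramsey. -/
theorem stmt_14 (c : ℝ → Bool) (hper : ∀ x, c (x + 1) = c x) (ε : ℝ) (hε : 0 < ε) :
    ∃ (b : Bool) (x : ℝ) (σ : Equiv.Perm (Fin 3)) (q : Fin 3 → ℝ),
      ∀ j : Fin 3, c (q j) = b ∧
        arcDist (q j)
          (x + ∑ i ∈ Finset.univ.filter (fun i => i < j),
            (![3/4, 1/6, 1/12] : Fin 3 → ℝ) (σ i)) ≤ ε := by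
  by_contra hcon
  push_neg at hcon
  -- sum computations
  have hfilt0 : Finset.filter (fun i => i < (0 : Fin 3)) Finset.univ = (∅ : Finset (Fin 3)) := by
    decide
  have hfilt1 : Finset.filter (fun i => i < (1 : Fin 3)) Finset.univ = {0} := by decide
  have hfilt2 : Finset.filter (fun i => i < (2 : Fin 3)) Finset.univ = {0, 1} := by decide
  have hsum0 : ∀ σ : Equiv.Perm (Fin 3),
      (∑ i ∈ Finset.univ.filter (fun i => i < (0 : Fin 3)),
        (![3/4, 1/6, 1/12] : Fin 3 → ℝ) (σ i)) = 0 := by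
    intro σ; rw [hfilt0, Finset.sum_empty]
  -- the key lemma: no monochromatic fuzzy copy with gaps (g, 1/4 - g) for g ∈ {1/12, 1/6}
  have key : ∀ (σ : Equiv.Perm (Fin 3)) (g : ℝ),
      (∑ i ∈ Finset.univ.filter (fun i => i < (1 : Fin 3)),
        (![3/4, 1/6, 1/12] : Fin 3 → ℝ) (σ i)) = g →
      (∑ i ∈ Finset.univ.filter (fun i => i < (2 : Fin 3)),
        (![3/4, 1/6, 1/12] : Fin 3 → ℝ) (σ i)) = 1/4 →
      ∀ p q r : ℝ, |q - (p + g)| ≤ ε → |r - (p + 1/4)| ≤ ε →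
        c q = c p → c r = c p → False := by
    intro σ g hg1 hg2 p q r hq hr hcq hcr
    obtain ⟨j, hj⟩ := hcon (c p) p σ ![p, q, r]
    rcases (by decide : ∀ j : Fin 3, j = 0 ∨ j = 1 ∨ j = 2) j with rfl | rfl | rfl
    · simp only [Matrix.cons_val_zero] at hj
      have h2 := hj (by trivial)
      rw [hsum0 σ, add_zero] at h2
      have h3 := arcDist_le_abs p p
      rw [sub_self, abs_zero] at h3
      linarith
    · simp only [Matrix.cons_val_one, Matrix.head_cons, Matrix.cons_val_zero] at hj
      have h2 := hj hcq
      rw [hg1] at h2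
      have h3 := arcDist_le_abs q (p + g)
      linarith
    · simp only [Matrix.cons_val_two, Matrix.tail_cons, Matrix.head_cons] at hj
      have h2 := hj hcr
      rw [hg2] at h2
      have h3 := arcDist_le_abs r (p + 1/4)
      linarith
  have keyA := key (Equiv.swap 0 2) (1/12)
    (by rw [hfilt1, Finset.sum_singleton,
          show ((Equiv.swap 0 2 : Equiv.Perm (Fin 3)) 0) = 2 from by decide]; norm_num [Matrix.cons_val_two, Matrix.tail_cons, Matrix.head_cons])
    (by rw [hfilt2, Finset.sum_pair (by decide : (0 : Fin 3) ≠ 1),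
          show ((Equiv.swap 0 2 : Equiv.Perm (Fin 3)) 0) = 2 from by decide,
          show ((Equiv.swap 0 2 : Equiv.Perm (Fin 3)) 1) = 1 from by decide]; norm_num [Matrix.cons_val_two, Matrix.tail_cons, Matrix.head_cons])
  have keyB := key (finRotate 3) (1/6)
    (by rw [hfilt1, Finset.sum_singleton,
          show ((finRotate 3) (0 : Fin 3)) = 1 from by decide]; norm_num)
    (by rw [hfilt2, Finset.sum_pair (by decide : (0 : Fin 3) ≠ 1),
          show ((finRotate 3) (0 : Fin 3)) = 1 from by decide,
          show ((finRotate 3) (1 : Fin 3)) = 2 from by decide]; norm_num [Matrix.cons_val_two, Matrix.tail_cons, Matrix.head_cons])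
  -- step: c is locally constant at scale ε
  have step : ∀ y e : ℝ, 0 ≤ e → e ≤ ε → c (y + e) = c y := by
    intro y e he0 he1
    have habs0 : ∀ z : ℝ, z = 0 → |z| ≤ ε := by rintro z rfl; simpa using hε.le
    have habse : ∀ z : ℝ, z = e → |z| ≤ ε := by
      rintro z rfl; rw [abs_of_nonneg he0]; exact he1
    have habsne : ∀ z : ℝ, z = -e → |z| ≤ ε := by
      rintro z rfl; rw [abs_neg, abs_of_nonneg he0]; exact he1
    have H1 : ¬(c (y+e+11/12) = c (y+e+9/12) ∧ c (y+e) = c (y+e+9/12)) := by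
      rintro ⟨u1, u2⟩
      exact keyB (y+e+9/12) (y+e+11/12) (y+e+1) (habs0 _ (by ring)) (habs0 _ (by ring)) u1
        ((hper (y+e)).trans u2)
    have H2 : ¬(c (y+e) = c (y+10/12) ∧ c (y+e+1/12) = c (y+10/12)) := by
      rintro ⟨u1, u2⟩
      exact keyB (y+10/12) (y+e+1) (y+e+1/12+1) (habse _ (by ring)) (habse _ (by ring))
        ((hper (y+e)).trans u1) ((hper (y+e+1/12)).trans u2)
    have H3 : ¬(c (y+10/12) = c (y+e+9/12) ∧ c y = c (y+e+9/12)) := by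
      rintro ⟨u1, u2⟩
      exact keyA (y+e+9/12) (y+10/12) (y+1) (habsne _ (by ring)) (habsne _ (by ring)) u1
        ((hper y).trans u2)
    have H4 : ¬(c y = c (y+e+11/12) ∧ c (y+e+2/12) = c (y+e+11/12)) := by
      rintro ⟨u1, u2⟩
      exact keyA (y+e+11/12) (y+1) (y+e+2/12+1) (habsne _ (by ring)) (habs0 _ (by ring))
        ((hper y).trans u1) ((hper (y+e+2/12)).trans u2)
    have H5 : ¬(c (y+e+2/12) = c (y+e+1/12) ∧ c (y+e+4/12) = c (y+e+1/12)) := by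
      rintro ⟨u1, u2⟩
      exact keyA (y+e+1/12) (y+e+2/12) (y+e+4/12) (habs0 _ (by ring)) (habs0 _ (by ring)) u1 u2
    have H6 : ¬(c (y+e+1/12) = c y ∧ c (y+e+3/12) = c y) := by
      rintro ⟨u1, u2⟩
      exact keyA y (y+e+1/12) (y+e+3/12) (habse _ (by ring)) (habse _ (by ring)) u1 u2
    have H7 : ¬(c (y+e+2/12) = c (y+e) ∧ c (y+e+3/12) = c (y+e)) := by
      rintro ⟨u1, u2⟩
      exact keyB (y+e) (y+e+2/12) (y+e+3/12) (habs0 _ (by ring)) (habs0 _ (by ring)) u1 u2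
    have H8 : ¬(c (y+10/12) = c (y+e+8/12) ∧ c (y+e+11/12) = c (y+e+8/12)) := by
      rintro ⟨u1, u2⟩
      exact keyB (y+e+8/12) (y+10/12) (y+e+11/12) (habsne _ (by ring)) (habs0 _ (by ring)) u1 u2
    have H9 : ¬(c (y+e+4/12) = c (y+e+3/12) ∧ c (y+e+6/12) = c (y+e+3/12)) := by
      rintro ⟨u1, u2⟩
      exact keyA (y+e+3/12) (y+e+4/12) (y+e+6/12) (habs0 _ (by ring)) (habs0 _ (by ring)) u1 u2
    have H10 : ¬(c (y+6/12) = c (y+e+4/12) ∧ c (y+e+7/12) = c (y+e+4/12)) := by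
      rintro ⟨u1, u2⟩
      exact keyB (y+e+4/12) (y+6/12) (y+e+7/12) (habsne _ (by ring)) (habs0 _ (by ring)) u1 u2
    have H11 : ¬(c (y+e+7/12) = c (y+e+6/12) ∧ c (y+e+9/12) = c (y+e+6/12)) := by
      rintro ⟨u1, u2⟩
      exact keyA (y+e+6/12) (y+e+7/12) (y+e+9/12) (habs0 _ (by ring)) (habs0 _ (by ring)) u1 u2
    have H12 : ¬(c (y+e+8/12) = c (y+6/12) ∧ c (y+e+9/12) = c (y+6/12)) := by
      rintro ⟨u1, u2⟩
      exact keyB (y+6/12) (y+e+8/12) (y+e+9/12) (habse _ (by ring)) (habse _ (by ring)) u1 u2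
    exact boolCore (c y) (c (y+6/12)) (c (y+10/12)) (c (y+e)) (c (y+e+1/12)) (c (y+e+2/12))
      (c (y+e+3/12)) (c (y+e+4/12)) (c (y+e+6/12)) (c (y+e+7/12)) (c (y+e+8/12)) (c (y+e+9/12))
      (c (y+e+11/12)) H1 H2 H3 H4 H5 H6 H7 H8 H9 H10 H11 H12
  -- iterate: c is constant
  have iter : ∀ e : ℝ, 0 ≤ e → e ≤ ε → ∀ n : ℕ, ∀ y : ℝ, c (y + n * e) = c y := by
    intro e he0 he1 n
    induction n with
    | zero => intro y; simp
    | succ k ih =>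
      intro y
      push_cast
      rw [show y + ((k : ℝ) + 1) * e = (y + (k : ℝ) * e) + e by ring]
      exact (step (y + (k : ℝ) * e) e he0 he1).trans (ih y)
  have const : ∀ t : ℝ, 0 ≤ t → ∀ y : ℝ, c (y + t) = c y := by
    intro t ht y
    set n : ℕ := ⌈t / ε⌉₊ + 1 with hn
    have hnpos : (0 : ℝ) < n := by positivity
    have hceil : t / ε ≤ (⌈t / ε⌉₊ : ℝ) := Nat.le_ceil _
    have ht' : t ≤ (⌈t / ε⌉₊ : ℝ) * ε := by
      rw [div_le_iff₀ hε] at hceil; exact hceil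
    have he1 : t / n ≤ ε := by
      rw [div_le_iff₀ hnpos]
      have : ((n : ℕ) : ℝ) = (⌈t / ε⌉₊ : ℝ) + 1 := by rw [hn]; push_cast; ring
      rw [this]
      nlinarith
    have he0 : 0 ≤ t / n := by positivity
    have := iter (t / n) he0 he1 n y
    rwa [show (n : ℝ) * (t / n) = t by field_simp] at this
  -- final contradiction: exact copy at 0
  obtain ⟨j, hj⟩ := hcon (c 0) 0 (Equiv.swap 0 2) ![0, 1/12, 1/4]
  have hsw1 : (∑ i ∈ Finset.univ.filter (fun i => i < (1 : Fin 3)),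
      (![3/4, 1/6, 1/12] : Fin 3 → ℝ) ((Equiv.swap 0 2 : Equiv.Perm (Fin 3)) i)) = 1/12 := by
    rw [hfilt1, Finset.sum_singleton,
      show ((Equiv.swap 0 2 : Equiv.Perm (Fin 3)) 0) = 2 from by decide]; norm_num [Matrix.cons_val_two, Matrix.tail_cons, Matrix.head_cons]
  have hsw2 : (∑ i ∈ Finset.univ.filter (fun i => i < (2 : Fin 3)),
      (![3/4, 1/6, 1/12] : Fin 3 → ℝ) ((Equiv.swap 0 2 : Equiv.Perm (Fin 3)) i)) = 1/4 := by
    rw [hfilt2, Finset.sum_pair (by decide : (0 : Fin 3) ≠ 1),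
      show ((Equiv.swap 0 2 : Equiv.Perm (Fin 3)) 0) = 2 from by decide,
      show ((Equiv.swap 0 2 : Equiv.Perm (Fin 3)) 1) = 1 from by decide]; norm_num [Matrix.cons_val_two, Matrix.tail_cons, Matrix.head_cons]
  rcases (by decide : ∀ j : Fin 3, j = 0 ∨ j = 1 ∨ j = 2) j with rfl | rfl | rfl
  · simp only [Matrix.cons_val_zero] at hj
    have h2 := hj (by trivial)
    rw [hsum0, add_zero] at h2
    have h3 := arcDist_le_abs (0 : ℝ) 0
    rw [sub_self, abs_zero] at h3
    linarith
  · simp only [Matrix.cons_val_one, Matrix.head_cons, Matrix.cons_val_zero] at hj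
    have hc : c (1/12 : ℝ) = c 0 := by
      have := const (1/12) (by norm_num) 0
      rwa [zero_add] at this
    have h2 := hj hc
    rw [hsw1] at h2
    have h3 := arcDist_le_abs (1/12 : ℝ) ((0 : ℝ) + 1/12)
    rw [show (1/12 : ℝ) - (0 + 1/12) = 0 by ring] at h3
    simp at h3
    linarith
  · simp only [Matrix.cons_val_two, Matrix.tail_cons, Matrix.head_cons] at hj
    have hc : c (1/4 : ℝ) = c 0 := by
      have := const (1/4) (by norm_num) 0
      rwa [zero_add] at this
    have h2 := hj hc
    rw [hsw2] at h2
    have h3 := arcDist_le_abs (1/4 : ℝ) ((0 : ℝ) + 1/4)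
    rw [show (1/4 : ℝ) - (0 + 1/4) = 0 by ring] at h3
    simp at h3
    linarith
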